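/- Fix an integer n ≥ 4 and a real number r0 > 0, and define b : (r0, ∞) → ℝ by b(s) = r0 · ∫_{s/r0}^∞ (t^{2n−4} − 1)^{−1/2} dt. Then b(s) ≤ 2 · r0^{n−2} · s^{3−n} for every s ∈ (2·r0, ∞). -/

import Mathlib

open MeasureTheory Set Real

/-- The Schoen-Yau/Eichmair barrier profile
`b(s) = r0 · ∫_{s/r0}^∞ (t^{2n-4} - 1)^{-1/2} dt`. -/
noncomputable def jangB (n : ℕ) (r0 : ℝ) (s : ℝ) : ℝ :=
  r0 * ∫ t in Set.Ioi (s / r0), (t ^ (2 * n - 4) - 1) ^ (-(1 / 2) : ℝ)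

/-- Proposition `bound.for.b`: `b(s) ≤ 2 · r0^{n-2} · s^{3-n}` for
every `s ∈ (2r0, ∞)`. -/
theorem jangB_le_two_mul (n : ℕ) (hn : 4 ≤ n) (r0 : ℝ) (hr0 : 0 < r0) :
    ∀ s ∈ Set.Ioi (2 * r0),
      jangB n r0 s ≤ 2 * r0 ^ ((n : ℝ) - 2) * s ^ ((3 : ℝ) - n) := by
  intro s hs
  have hs2 : 2 * r0 < s := hs
  have hs0 : 0 < s := by linarith
  have hx : (2:ℝ) < s / r0 := by
    rw [lt_div_iff₀ hr0]; linarith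
  set x := s / r0 with hxdef
  have hx0 : 0 < x := by linarith
  have hnr : (4:ℝ) ≤ (n:ℝ) := by exact_mod_cast hn
  have hexp : ((2:ℝ) - n) < -1 := by linarith
  have hcast : ((2 * n - 4 : ℕ) : ℝ) = 2 * (n:ℝ) - 4 := by
    have : 4 ≤ 2 * n := by omega
    push_cast [Nat.cast_sub this]; ring
  -- the comparison function
  have hgi : IntegrableOn (fun t : ℝ => 2 * t ^ ((2:ℝ) - n)) (Set.Ioi x) := by
    exact (integrableOn_Ioi_rpow_of_lt hexp hx0).const_mul 2
  -- pointwise bound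
  have hptwise : ∀ t ∈ Set.Ioi x,
      (t ^ (2 * n - 4) - 1) ^ (-(1 / 2) : ℝ) ≤ 2 * t ^ ((2:ℝ) - n) := by
    intro t ht
    have ht2 : (2:ℝ) < t := lt_trans hx ht
    have ht0 : (0:ℝ) < t := by linarith
    have h16 : (16:ℝ) ≤ t ^ (2 * n - 4) := by
      calc (16:ℝ) = 2 ^ 4 := by norm_num
        _ ≤ 2 ^ (2 * n - 4) := by
            apply pow_le_pow_right₀ (by norm_num); omega
        _ ≤ t ^ (2 * n - 4) := by
            apply pow_le_pow_left₀ (by norm_num) ht2.le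
    have hA : (1/4 : ℝ) * t ^ (2 * n - 4) ≤ t ^ (2 * n - 4) - 1 := by linarith
    have hApos : (0:ℝ) < t ^ (2 * n - 4) - 1 := by
      have := pow_pos ht0 (2 * n - 4); nlinarith
    have hkey : ((1/4 : ℝ) * t ^ (2 * n - 4)) ^ ((1/2 : ℝ)) = (1/2) * t ^ ((n:ℝ) - 2) := by
      rw [Real.mul_rpow (by norm_num) (pow_nonneg ht0.le _)]
      have h1 : ((1/4:ℝ)) ^ ((1/2:ℝ)) = 1/2 := by
        rw [show (1/4:ℝ) = ((1/2:ℝ)) ^ (2:ℕ) by norm_num,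
          ← Real.rpow_natCast ((1/2):ℝ) 2, ← Real.rpow_mul (by norm_num)]
        norm_num
      have h2 : (t ^ (2 * n - 4)) ^ ((1/2:ℝ)) = t ^ ((n:ℝ) - 2) := by
        rw [← Real.rpow_natCast t (2 * n - 4), ← Real.rpow_mul ht0.le, hcast]
        congr 1; ring
      rw [h1, h2]
    have hsqrt : (1/2 : ℝ) * t ^ ((n:ℝ) - 2) ≤ (t ^ (2 * n - 4) - 1) ^ ((1/2 : ℝ)) := by
      rw [← hkey]
      exact Real.rpow_le_rpow (by positivity) hA (by norm_num)
    have hposL : (0:ℝ) < (1/2 : ℝ) * t ^ ((n:ℝ) - 2) := by positivity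
    have := inv_anti₀ hposL hsqrt
    calc (t ^ (2 * n - 4) - 1) ^ (-(1 / 2) : ℝ)
        = ((t ^ (2 * n - 4) - 1) ^ ((1/2 : ℝ)))⁻¹ := by
          rw [← Real.rpow_neg hApos.le]
      _ ≤ ((1/2 : ℝ) * t ^ ((n:ℝ) - 2))⁻¹ := this
      _ = 2 * t ^ ((2:ℝ) - n) := by
          rw [mul_inv, show ((2:ℝ) - n) = -((n:ℝ) - 2) by ring,
            Real.rpow_neg ht0.le]
          norm_num
  -- compare integrals
  have hI : (∫ t in Set.Ioi x, (t ^ (2 * n - 4) - 1) ^ (-(1 / 2) : ℝ))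
      ≤ ∫ t in Set.Ioi x, 2 * t ^ ((2:ℝ) - n) := by
    apply integral_mono_of_nonneg
    · filter_upwards [ae_restrict_mem measurableSet_Ioi] with t ht
      have ht2 : (2:ℝ) < t := lt_trans hx ht
      have ht0 : (0:ℝ) < t := by linarith
      have h16 : (16:ℝ) ≤ t ^ (2 * n - 4) := by
        calc (16:ℝ) = 2 ^ 4 := by norm_num
          _ ≤ 2 ^ (2 * n - 4) := by
              apply pow_le_pow_right₀ (by norm_num); omega
          _ ≤ t ^ (2 * n - 4) := by
              apply pow_le_pow_left₀ (by norm_num) ht2.le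
      exact Real.rpow_nonneg (by linarith) _
    · exact hgi
    · filter_upwards [ae_restrict_mem measurableSet_Ioi] with t ht
      exact hptwise t ht
  have hIg : (∫ t in Set.Ioi x, 2 * t ^ ((2:ℝ) - n)) = 2 * (-x ^ (((2:ℝ) - n) + 1) / (((2:ℝ) - n) + 1)) := by
    rw [MeasureTheory.integral_const_mul, integral_Ioi_rpow_of_lt hexp hx0]
  have hxp : (0:ℝ) < x ^ ((3:ℝ) - n) := Real.rpow_pos_of_pos hx0 _
  have hIg' : (∫ t in Set.Ioi x, 2 * t ^ ((2:ℝ) - n)) ≤ 2 * x ^ ((3:ℝ) - n) := by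
    rw [hIg, show ((2:ℝ) - n) + 1 = (3:ℝ) - n by ring]
    rw [neg_div, ← div_neg, show -((3:ℝ) - n) = (n:ℝ) - 3 by ring]
    have hn3 : (1:ℝ) ≤ (n:ℝ) - 3 := by linarith
    have : x ^ ((3:ℝ) - n) / ((n:ℝ) - 3) ≤ x ^ ((3:ℝ) - n) := by
      apply div_le_self hxp.le hn3
    linarith
  have hfinal : jangB n r0 s ≤ r0 * (2 * x ^ ((3:ℝ) - n)) := by
    unfold jangB
    rw [← hxdef]
    exact mul_le_mul_of_nonneg_left (le_trans hI hIg') hr0.le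
  refine hfinal.trans (le_of_eq ?_)
  have hmul : r0 ^ ((n:ℝ) - 2) * r0 ^ ((3:ℝ) - n) = r0 := by
    rw [← Real.rpow_add hr0]; norm_num
  have hr0p : (0:ℝ) < r0 ^ ((3:ℝ) - n) := Real.rpow_pos_of_pos hr0 _
  rw [hxdef, Real.div_rpow hs0.le hr0.le]
  field_simp
  linear_combination (-1) * hmul
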